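/- arXiv:1901.06527 — 2 statements merged into one kernel-verified Lean document; each statement's English description precedes it below -/
import Mathlib

section
/- Let X ∈ bilr(s,r) ⊆ ℝ^{n×n}, let M ∈ ℝ^{n×n}, and let X' be any minimizer over Z ∈ bilr(s,r) of ‖M − Z‖_F. Let 𝒮 be any linear subspace of ℝ^{n×n} containing both X and X − X', and let P_𝒮 denote the orthogonal projection onto 𝒮 with respect to the Frobenius inner product. Then ‖X − X'‖_F ≤ 2 ‖X − P_𝒮(M)‖_F. -/
open MeasureTheory ProbabilityTheory

noncomputable section

/-- Frobenius inner product of two real matrices. -/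
def frobInner {a b : ℕ} (X Y : Matrix (Fin a) (Fin b) ℝ) : ℝ :=
  ∑ i, ∑ j, X i j * Y i j

/-- Frobenius norm of a real matrix. -/
def frobNorm {a b : ℕ} (X : Matrix (Fin a) (Fin b) ℝ) : ℝ :=
  Real.sqrt (∑ i, ∑ j, (X i j) ^ 2)

/-- Sign function with values in {−1, 1}. -/
def sgn (x : ℝ) : ℝ := if x < 0 then -1 else 1

/-- The set of matrices of rank at most `r` supported on a set `S × T` with `|S| = |T| = s`. -/
def bilr (n s r : ℕ) : Set (Matrix (Fin n) (Fin n) ℝ) :=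
  {X | X.rank ≤ r ∧ ∃ S T : Finset (Fin n), S.card = s ∧ T.card = s ∧
      ∀ i j, X i j ≠ 0 → i ∈ S ∧ j ∈ T}

/-- The intersection of `bilr n s r` with the Frobenius unit sphere. -/
def bilrSphere (n s r : ℕ) : Set (Matrix (Fin n) (Fin n) ℝ) :=
  {X | X ∈ bilr n s r ∧ frobNorm X = 1}

/-- Embedding of matrices into Euclidean space. -/
def frobEmb {a b : ℕ} (A : Matrix (Fin a) (Fin b) ℝ) :
    EuclideanSpace ℝ (Fin a × Fin b) := WithLp.toLp 2 (fun p : Fin a × Fin b => A p.1 p.2)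

lemma frobEmb_sub {a b : ℕ} (A B : Matrix (Fin a) (Fin b) ℝ) :
    frobEmb (A - B) = frobEmb A - frobEmb B := rfl

lemma frobNorm_eq {a b : ℕ} (A : Matrix (Fin a) (Fin b) ℝ) :
    frobNorm A = ‖frobEmb A‖ := by
  rw [EuclideanSpace.norm_eq, frobNorm]
  congr 1
  rw [Fintype.sum_prod_type]
  simp [frobEmb, sq_abs]

lemma frobInner_eq {a b : ℕ} (A B : Matrix (Fin a) (Fin b) ℝ) :
    frobInner A B = inner ℝ (frobEmb A) (frobEmb B) := by
  rw [frobInner, PiLp.inner_apply]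
  rw [Fintype.sum_prod_type]
  simp [frobEmb, RCLike.inner_apply, mul_comm]

/-- If `X ∈ bilr(s,r)`, `X'` is a best approximation to `M` from `bilr(s,r)`, and `𝒮` is a
subspace containing `X` and `X − X'`, with `P` the orthogonal projection onto `𝒮` for the
Frobenius inner product, then `‖X − X'‖_F ≤ 2 ‖X − P(M)‖_F`. -/
theorem best_approx_vs_projection (n s r : ℕ)
    (X : Matrix (Fin n) (Fin n) ℝ) (hX : X ∈ bilr n s r)
    (M X' : Matrix (Fin n) (Fin n) ℝ) (hX' : X' ∈ bilr n s r)
    (hmin : ∀ Z ∈ bilr n s r, frobNorm (M - X') ≤ frobNorm (M - Z))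
    (𝒮 : Submodule ℝ (Matrix (Fin n) (Fin n) ℝ))
    (hX𝒮 : X ∈ 𝒮) (hXX'𝒮 : X - X' ∈ 𝒮)
    (P : Matrix (Fin n) (Fin n) ℝ → Matrix (Fin n) (Fin n) ℝ)
    (hPmem : ∀ W, P W ∈ 𝒮)
    (hPorth : ∀ W, ∀ Y ∈ 𝒮, frobInner (W - P W) Y = 0) :
    frobNorm (X - X') ≤ 2 * frobNorm (X - P M) := by
  have hX'𝒮 : X' ∈ 𝒮 := by
    have := 𝒮.sub_mem hX𝒮 hXX'𝒮
    simpa using this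
  -- Pythagoras for any Y ∈ 𝒮
  have pyth : ∀ Y ∈ 𝒮, ‖frobEmb M - frobEmb Y‖ ^ 2
      = ‖frobEmb M - frobEmb (P M)‖ ^ 2 + ‖frobEmb (P M) - frobEmb Y‖ ^ 2 := by
    intro Y hY
    have horth : inner ℝ (frobEmb M - frobEmb (P M)) (frobEmb (P M) - frobEmb Y) = (0 : ℝ) := by
      rw [← frobEmb_sub, ← frobEmb_sub, ← frobInner_eq]
      exact hPorth M _ (𝒮.sub_mem (hPmem M) hY)
    have hsplit : frobEmb M - frobEmb Y
        = (frobEmb M - frobEmb (P M)) + (frobEmb (P M) - frobEmb Y) := by abel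
    rw [hsplit, norm_add_sq_real, horth]
    ring
  have hle : frobNorm (M - X') ≤ frobNorm (M - X) := hmin X hX
  rw [frobNorm_eq, frobNorm_eq, frobEmb_sub, frobEmb_sub] at hle
  have hsq : ‖frobEmb (P M) - frobEmb X'‖ ^ 2 ≤ ‖frobEmb (P M) - frobEmb X‖ ^ 2 := by
    have h1 := pyth X' hX'𝒮
    have h2 := pyth X hX𝒮
    nlinarith [norm_nonneg (frobEmb M - frobEmb X'), norm_nonneg (frobEmb M - frobEmb X)]
  have hle2 : ‖frobEmb (P M) - frobEmb X'‖ ≤ ‖frobEmb X - frobEmb (P M)‖ := by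
    rw [norm_sub_rev (frobEmb X)]
    nlinarith [norm_nonneg (frobEmb (P M) - frobEmb X'),
      norm_nonneg (frobEmb (P M) - frobEmb X)]
  rw [frobNorm_eq, frobNorm_eq, frobEmb_sub, frobEmb_sub]
  calc ‖frobEmb X - frobEmb X'‖
      ≤ ‖frobEmb X - frobEmb (P M)‖ + ‖frobEmb (P M) - frobEmb X'‖ :=
        norm_sub_le_norm_sub_add_norm_sub _ _ _
    _ ≤ ‖frobEmb X - frobEmb (P M)‖ + ‖frobEmb X - frobEmb (P M)‖ :=
        add_le_add_right hle2 _
    _ = 2 * ‖frobEmb X - frobEmb (P M)‖ := by ring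

end
end

section
/- Let D ∈ ℝ^{p×n}, s ∈ {1,…,n} with 2s ≤ n, and δ ∈ (0,1). Suppose D satisfies the restricted isometry property of order 2s with constant δ, i.e., (1−δ)‖z‖₂² ≤ ‖Dz‖₂² ≤ (1+δ)‖z‖₂² for every 2s-sparse vector z ∈ ℝⁿ. Let k ≥ 1, let Z ∈ ℝ^{n×k} be s-row-sparse, let E ∈ ℝ^{p×k}, and set Y = DZ + E. Then any best approximation Z'' of DᵀY by an s-row-sparse matrix (obtained by keeping the s rows of DᵀY with largest ℓ₂ norms and zeroing the others) satisfies ‖Z − Z''‖_F ≤ 2δ‖Z‖_F + 2√2 ‖E‖_F. -/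
open MeasureTheory ProbabilityTheory Matrix

noncomputable section

/-- A vector is `s`-sparse if its support is contained in a set of size at most `s`. -/
def SparseVec {n : ℕ} (s : ℕ) (z : Fin n → ℝ) : Prop :=
  ∃ S : Finset (Fin n), S.card ≤ s ∧ ∀ i, z i ≠ 0 → i ∈ S

/-- A matrix is `s`-row-sparse if its nonzero rows are indexed by a set of size at most `s`. -/
def RowSparse {n k : ℕ} (s : ℕ) (Z : Matrix (Fin n) (Fin k) ℝ) : Prop :=
  ∃ S : Finset (Fin n), S.card ≤ s ∧ ∀ i, (∃ j, Z i j ≠ 0) → i ∈ S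

/-- A matrix is `s`-column-sparse if its nonzero columns are indexed by a set of size ≤ `s`. -/
def ColSparse {n k : ℕ} (s : ℕ) (Z : Matrix (Fin n) (Fin k) ℝ) : Prop :=
  ∃ T : Finset (Fin k), T.card ≤ s ∧ ∀ j, (∃ i, Z i j ≠ 0) → j ∈ T

/-- `D` satisfies the restricted isometry property of order `t` with constant `δ`. -/
def RIP {p n : ℕ} (t : ℕ) (δ : ℝ) (D : Matrix (Fin p) (Fin n) ℝ) : Prop :=
  ∀ z : Fin n → ℝ, SparseVec t z →
    (1 - δ) * (∑ i, (z i) ^ 2) ≤ (∑ i, (D.mulVec z i) ^ 2) ∧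
    (∑ i, (D.mulVec z i) ^ 2) ≤ (1 + δ) * (∑ i, (z i) ^ 2)

private lemma sum_sq_nn {m : ℕ} (f : Fin m → ℝ) : 0 ≤ ∑ i, f i ^ 2 :=
  Finset.sum_nonneg fun _ _ => sq_nonneg _

private lemma fsq_nn {a b : ℕ} (X : Matrix (Fin a) (Fin b) ℝ) : 0 ≤ ∑ i, ∑ j, X i j ^ 2 :=
  Finset.sum_nonneg fun _ _ => sum_sq_nn _

private lemma frobNorm_nn {a b : ℕ} (X : Matrix (Fin a) (Fin b) ℝ) : 0 ≤ frobNorm X :=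
  Real.sqrt_nonneg _

private lemma frobNorm_sq {a b : ℕ} (X : Matrix (Fin a) (Fin b) ℝ) :
    frobNorm X ^ 2 = ∑ i, ∑ j, X i j ^ 2 := Real.sq_sqrt (fsq_nn X)

private lemma frobNorm_le_of_fsq_le {a b : ℕ} {X Y : Matrix (Fin a) (Fin b) ℝ}
    (h : ∑ i, ∑ j, X i j ^ 2 ≤ ∑ i, ∑ j, Y i j ^ 2) : frobNorm X ≤ frobNorm Y :=
  Real.sqrt_le_sqrt h

private lemma frobInner_le {a b : ℕ} (X Y : Matrix (Fin a) (Fin b) ℝ) :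
    frobInner X Y ≤ frobNorm X * frobNorm Y := by
  have h := Finset.sum_mul_sq_le_sq_mul_sq (Finset.univ ×ˢ Finset.univ)
    (fun q : Fin a × Fin b => X q.1 q.2) (fun q => Y q.1 q.2)
  rw [Finset.sum_product, Finset.sum_product, Finset.sum_product] at h
  have h2 : frobInner X Y ≤ |frobInner X Y| := le_abs_self _
  have h3 : |frobInner X Y| = Real.sqrt ((frobInner X Y) ^ 2) := (Real.sqrt_sq_eq_abs _).symm
  calc frobInner X Y ≤ Real.sqrt ((frobInner X Y) ^ 2) := h3 ▸ h2
    _ ≤ Real.sqrt ((∑ i, ∑ j, X i j ^ 2) * ∑ i, ∑ j, Y i j ^ 2) := Real.sqrt_le_sqrt h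
    _ = frobNorm X * frobNorm Y := Real.sqrt_mul (fsq_nn X) _

private lemma frobNorm_add_le {a b : ℕ} (X Y : Matrix (Fin a) (Fin b) ℝ) :
    frobNorm (X + Y) ≤ frobNorm X + frobNorm Y := by
  have hexp : ∑ i, ∑ j, ((X + Y) i j) ^ 2
      = (∑ i, ∑ j, X i j ^ 2) + 2 * frobInner X Y + ∑ i, ∑ j, Y i j ^ 2 := by
    have h : ∀ (i : Fin a) (j : Fin b), ((X + Y) i j) ^ 2
        = X i j ^ 2 + 2 * (X i j * Y i j) + Y i j ^ 2 := fun i j => by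
      simp [Matrix.add_apply]; ring
    simp_rw [h, Finset.sum_add_distrib, ← Finset.mul_sum]
    rfl
  have hb : ∑ i, ∑ j, ((X + Y) i j) ^ 2 ≤ (frobNorm X + frobNorm Y) ^ 2 := by
    have := frobInner_le X Y
    have h1 := frobNorm_sq X
    have h2 := frobNorm_sq Y
    nlinarith
  calc frobNorm (X + Y) = Real.sqrt (∑ i, ∑ j, ((X + Y) i j) ^ 2) := rfl
    _ ≤ Real.sqrt ((frobNorm X + frobNorm Y) ^ 2) := Real.sqrt_le_sqrt hb
    _ = frobNorm X + frobNorm Y := Real.sqrt_sq (add_nonneg (frobNorm_nn X) (frobNorm_nn Y))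

private lemma mulVec_lin {p n : ℕ} (D : Matrix (Fin p) (Fin n) ℝ) (a b : ℝ) (u v : Fin n → ℝ) (i : Fin p) :
    D.mulVec (fun l => a * u l + b * v l) i = a * D.mulVec u i + b * D.mulVec v i := by
  simp only [Matrix.mulVec, dotProduct, Finset.mul_sum, ← Finset.sum_add_distrib]
  exact Finset.sum_congr rfl fun l _ => by ring

private lemma dot_transpose {p n : ℕ} (D : Matrix (Fin p) (Fin n) ℝ) (x : Fin n → ℝ) (w : Fin p → ℝ) :
    ∑ i, x i * Dᵀ.mulVec w i = ∑ j, D.mulVec x j * w j := by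
  have h := Matrix.dotProduct_mulVec x Dᵀ w
  rw [Matrix.vecMul_transpose] at h
  simpa [dotProduct] using h

private lemma sum_expand {m : ℕ} (a b : ℝ) (f g : Fin m → ℝ) :
    ∑ i, (a * f i + b * g i) ^ 2
      = a^2 * ∑ i, f i^2 + 2*a*b*(∑ i, f i * g i) + b^2 * ∑ i, g i^2 := by
  have h : ∀ i : Fin m, (a*f i + b*g i)^2 = a^2*f i^2 + 2*a*b*(f i*g i) + b^2*g i^2 :=
    fun i => by ring
  simp_rw [h, Finset.sum_add_distrib, ← Finset.mul_sum]

/-- Polarization consequence of RIP. -/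
private lemma rip_polar {p n s : ℕ} {δ : ℝ} {D : Matrix (Fin p) (Fin n) ℝ}
    (hD : RIP (2 * s) δ D) (S : Finset (Fin n)) (hS : S.card ≤ 2 * s)
    (u v : Fin n → ℝ) (hu : ∀ i ∉ S, u i = 0) (hv : ∀ i ∉ S, v i = 0) :
    Real.sqrt (∑ i, u i ^ 2) * Real.sqrt (∑ i, v i ^ 2) *
        ((∑ i, D.mulVec u i * D.mulVec v i) - ∑ i, u i * v i)
      ≤ δ * (∑ i, u i ^ 2) * (∑ i, v i ^ 2) := by
  set P := ∑ i, u i ^ 2 with hP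
  set Q := ∑ i, v i ^ 2 with hQ
  set α := Real.sqrt Q with hα
  set β := Real.sqrt P with hβ
  have hα2 : α ^ 2 = Q := Real.sq_sqrt (sum_sq_nn v)
  have hβ2 : β ^ 2 = P := Real.sq_sqrt (sum_sq_nn u)
  have hsp : ∀ a b : ℝ, SparseVec (2 * s) (fun l => a * u l + b * v l) := by
    intro a b
    refine ⟨S, hS, fun i hi => ?_⟩
    by_contra hiS
    have hi' : a * u i + b * v i ≠ 0 := hi
    rw [hu i hiS, hv i hiS] at hi'
    simp at hi'
  have hup := (hD _ (hsp α β)).2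
  have hlo := (hD _ (hsp α (-β))).1
  have hDe : ∀ a b : ℝ, ∑ i, (D.mulVec (fun l => a * u l + b * v l) i) ^ 2
      = a^2 * ∑ i, (D.mulVec u i)^2 + 2*a*b*(∑ i, D.mulVec u i * D.mulVec v i)
        + b^2 * ∑ i, (D.mulVec v i)^2 := by
    intro a b
    have h : ∀ i, (D.mulVec (fun l => a * u l + b * v l) i) ^ 2
        = (a * D.mulVec u i + b * D.mulVec v i) ^ 2 := fun i => by rw [mulVec_lin]
    simp_rw [h]
    exact sum_expand a b _ _
  have hVe : ∀ a b : ℝ, ∑ i, ((fun l => a * u l + b * v l) i) ^ 2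
      = a^2 * P + 2*a*b*(∑ i, u i * v i) + b^2 * Q := fun a b => sum_expand a b u v
  rw [hDe, hVe] at hup hlo
  simp only [neg_sq] at hup hlo
  rw [hα2, hβ2] at hup hlo
  nlinarith [hup, hlo]

/-- Column bound for the signal part. -/
private lemma colA {p n s : ℕ} {δ : ℝ} (hδ0 : 0 < δ) {D : Matrix (Fin p) (Fin n) ℝ}
    (hD : RIP (2 * s) δ D) (S : Finset (Fin n)) (hS : S.card ≤ 2 * s)
    (z : Fin n → ℝ) (hz : ∀ i ∉ S, z i = 0) :
    ∑ i, (if i ∈ S then Dᵀ.mulVec (D.mulVec z) i - z i else 0) ^ 2 ≤ δ ^ 2 * ∑ i, z i ^ 2 := by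
  set x : Fin n → ℝ := fun i => if i ∈ S then Dᵀ.mulVec (D.mulVec z) i - z i else 0 with hxdef
  have hx0 : ∀ i ∉ S, x i = 0 := fun i hi => by simp [hxdef, hi]
  set a := ∑ i, x i ^ 2 with ha
  set b := ∑ i, z i ^ 2 with hb
  have han : 0 ≤ a := sum_sq_nn x
  have hbn : 0 ≤ b := sum_sq_nn z
  -- a = ⟨Dx, Dz⟩ - ⟨x, z⟩
  have key : a = (∑ i, D.mulVec x i * D.mulVec z i) - ∑ i, x i * z i := by
    have h1 : a = ∑ i, x i * (Dᵀ.mulVec (D.mulVec z) i - z i) := by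
      rw [ha]
      refine Finset.sum_congr rfl fun i _ => ?_
      by_cases hi : i ∈ S
      · simp [hxdef, hi]; ring
      · simp [hxdef, hi]
    have h2 : ∑ i, x i * (Dᵀ.mulVec (D.mulVec z) i - z i)
        = (∑ i, x i * Dᵀ.mulVec (D.mulVec z) i) - ∑ i, x i * z i := by
      simp_rw [mul_sub, Finset.sum_sub_distrib]
    rw [h1, h2, dot_transpose]
  have hpolar := rip_polar hD S hS x z hx0 hz
  rw [← key] at hpolar
  rw [← ha, ← hb] at hpolar
  -- hpolar : √a * √b * a ≤ δ * a * b
  rcases eq_or_lt_of_le hbn with hbe | hbp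
  · -- b = 0, hence z = 0, hence x = 0
    have hz0 : ∀ i, z i = 0 := by
      intro i
      have h := (Finset.sum_eq_zero_iff_of_nonneg
        (fun i _ => sq_nonneg (z i))).mp hbe.symm i (Finset.mem_univ i)
      exact pow_eq_zero_iff two_ne_zero |>.mp h
    have hzf : z = fun _ => 0 := funext hz0
    have hDz : D.mulVec z = 0 := by rw [hzf]; exact Matrix.mulVec_zero D
    have hx00 : ∀ i, x i = 0 := by
      intro i
      have hmv : Dᵀ.mulVec (D.mulVec z) i = 0 := by
        rw [hDz]
        exact congrFun (Matrix.mulVec_zero Dᵀ) i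
      have hite : x i = if i ∈ S then Dᵀ.mulVec (D.mulVec z) i - z i else 0 := rfl
      rw [hite, hmv, hz0 i]
      simp
    have ha0 : a = 0 := by
      rw [ha]
      exact Finset.sum_eq_zero fun i _ => by rw [hx00 i]; ring
    rw [ha0, ← hbe, mul_zero]
  · rcases eq_or_lt_of_le han with hae | hap
    · rw [← hae]
      positivity
    · have h1 : Real.sqrt a * Real.sqrt b ≤ δ * b :=
        (mul_le_mul_iff_of_pos_right hap).mp (by linarith [hpolar])
      have h2 := mul_self_le_mul_self
        (mul_nonneg (Real.sqrt_nonneg a) (Real.sqrt_nonneg b)) h1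
      have hLHS : Real.sqrt a * Real.sqrt b * (Real.sqrt a * Real.sqrt b) = a * b := by
        rw [show Real.sqrt a * Real.sqrt b * (Real.sqrt a * Real.sqrt b)
            = Real.sqrt a ^ 2 * Real.sqrt b ^ 2 by ring, Real.sq_sqrt han, Real.sq_sqrt hbn]
      rw [hLHS] at h2
      exact (mul_le_mul_iff_of_pos_right hbp).mp (by nlinarith [h2])

/-- Column bound for the noise part. -/
private lemma colE {p n s : ℕ} {δ : ℝ} (hδ0 : 0 < δ) (hδ1 : δ < 1)
    {D : Matrix (Fin p) (Fin n) ℝ}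
    (hD : RIP (2 * s) δ D) (S : Finset (Fin n)) (hS : S.card ≤ 2 * s)
    (e : Fin p → ℝ) :
    ∑ i, (if i ∈ S then Dᵀ.mulVec e i else 0) ^ 2 ≤ 2 * ∑ j, e j ^ 2 := by
  set x : Fin n → ℝ := fun i => if i ∈ S then Dᵀ.mulVec e i else 0 with hxdef
  set a := ∑ i, x i ^ 2 with ha
  set c := ∑ j, e j ^ 2 with hc
  have han : 0 ≤ a := sum_sq_nn x
  have hcn : 0 ≤ c := sum_sq_nn e
  have key : a = ∑ j, D.mulVec x j * e j := by
    have h1 : a = ∑ i, x i * Dᵀ.mulVec e i := by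
      rw [ha]
      refine Finset.sum_congr rfl fun i _ => ?_
      by_cases hi : i ∈ S
      · simp [hxdef, hi]; ring
      · simp [hxdef, hi]
    rw [h1, dot_transpose]
  have hxs : SparseVec (2 * s) x :=
    ⟨S, hS, fun i h => by by_contra hi; exact h (by simp [hxdef, hi])⟩
  have hup := (hD x hxs).2
  have hcs := Finset.sum_mul_sq_le_sq_mul_sq Finset.univ (fun j => D.mulVec x j) e
  have h2 : a ^ 2 ≤ (1 + δ) * a * c := by
    calc a ^ 2 = (∑ j, D.mulVec x j * e j) ^ 2 := by rw [key]
      _ ≤ (∑ j, (D.mulVec x j) ^ 2) * ∑ j, e j ^ 2 := hcs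
      _ ≤ ((1 + δ) * a) * c := by
          apply mul_le_mul_of_nonneg_right _ hcn
          exact hup
      _ = (1 + δ) * a * c := by ring
  rcases eq_or_lt_of_le han with hae | hap
  · rw [← hae]; positivity
  · have h3 : a ≤ (1 + δ) * c :=
      (mul_le_mul_iff_of_pos_right hap).mp (by nlinarith [h2])
    nlinarith [hcn]

/-- Hard-thresholded recovery of an `s`-row-sparse matrix `Z` from inexact measurements
`Y = DZ + E`: any best `s`-row-sparse approximation `Z''` of `DᵀY` satisfies
`‖Z − Z''‖_F ≤ 2δ‖Z‖_F + 2√2‖E‖_F`. -/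
theorem row_sparse_hard_thresholding (p n s k : ℕ) (hs : 1 ≤ s) (h2s : 2 * s ≤ n) (hk : 1 ≤ k)
    (δ : ℝ) (hδ0 : 0 < δ) (hδ1 : δ < 1)
    (D : Matrix (Fin p) (Fin n) ℝ) (hD : RIP (2 * s) δ D)
    (Z : Matrix (Fin n) (Fin k) ℝ) (hZ : RowSparse s Z)
    (E : Matrix (Fin p) (Fin k) ℝ)
    (Z'' : Matrix (Fin n) (Fin k) ℝ) (hZ''sparse : RowSparse s Z'')
    (hZ''min : ∀ W : Matrix (Fin n) (Fin k) ℝ, RowSparse s W →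
      frobNorm (Dᵀ * (D * Z + E) - Z'') ≤ frobNorm (Dᵀ * (D * Z + E) - W)) :
    frobNorm (Z - Z'') ≤ 2 * δ * frobNorm Z + 2 * Real.sqrt 2 * frobNorm E := by
  obtain ⟨S₁, hS₁c, hS₁⟩ := hZ
  obtain ⟨S₂, hS₂c, hS₂⟩ := hZ''sparse
  set S : Finset (Fin n) := S₁ ∪ S₂ with hSdef
  have hScard : S.card ≤ 2 * s := le_trans (Finset.card_union_le S₁ S₂) (by omega)
  have hZ0 : ∀ i ∉ S, ∀ j, Z i j = 0 := by
    intro i hi j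
    by_contra h
    exact hi (Finset.mem_union_left _ (hS₁ i ⟨j, h⟩))
  have hZ''0 : ∀ i ∉ S, ∀ j, Z'' i j = 0 := by
    intro i hi j
    by_contra h
    exact hi (Finset.mem_union_right _ (hS₂ i ⟨j, h⟩))
  set M : Matrix (Fin n) (Fin k) ℝ := Dᵀ * (D * Z + E) with hM
  set A : Matrix (Fin n) (Fin k) ℝ := fun i j => if i ∈ S then Z i j - M i j else 0 with hA
  set B : Matrix (Fin n) (Fin k) ℝ := fun i j => if i ∈ S then M i j - Z'' i j else 0 with hB
  have hAB : Z - Z'' = A + B := by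
    ext i j
    by_cases hi : i ∈ S
    · rw [Matrix.add_apply]; simp [hA, hB, hi, Matrix.sub_apply, Matrix.add_apply]
    · rw [Matrix.add_apply]; simp [hA, hB, hi, Matrix.sub_apply, Matrix.add_apply, hZ0 i hi j, hZ''0 i hi j]
  have hsplit : ∀ W : Matrix (Fin n) (Fin k) ℝ, (∀ i ∉ S, ∀ j, W i j = 0) →
      (∑ i, ∑ j, ((M - W) i j) ^ 2)
        = (∑ i, ∑ j, (if i ∈ S then M i j - W i j else 0) ^ 2)
          + ∑ i, ∑ j, (if i ∈ S then 0 else M i j) ^ 2 := by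
    intro W hW
    rw [← Finset.sum_add_distrib]
    refine Finset.sum_congr rfl fun i _ => ?_
    by_cases hi : i ∈ S
    · simp [hi, Matrix.sub_apply]
    · simp [hi, Matrix.sub_apply, hW i hi]
  have hfsq : ∑ i, ∑ j, ((M - Z'') i j) ^ 2 ≤ ∑ i, ∑ j, ((M - Z) i j) ^ 2 := by
    have h1 := hZ''min Z ⟨S₁, hS₁c, hS₁⟩
    rw [show frobNorm (M - Z'') = Real.sqrt (∑ i, ∑ j, ((M - Z'') i j) ^ 2) from rfl,
      show frobNorm (M - Z) = Real.sqrt (∑ i, ∑ j, ((M - Z) i j) ^ 2) from rfl] at h1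
    exact (Real.sqrt_le_sqrt_iff (fsq_nn _)).mp h1
  have hAeq : (∑ i, ∑ j, (A i j) ^ 2) = ∑ i, ∑ j, (if i ∈ S then M i j - Z i j else 0) ^ 2 := by
    refine Finset.sum_congr rfl fun i _ => Finset.sum_congr rfl fun j _ => ?_
    by_cases hi : i ∈ S <;> simp [hA, hi] <;> ring
  have hBle : (∑ i, ∑ j, (B i j) ^ 2) ≤ ∑ i, ∑ j, (A i j) ^ 2 := by
    have e1 := hsplit Z'' hZ''0
    have e2 := hsplit Z hZ0
    have hBeq : (∑ i, ∑ j, (B i j) ^ 2)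
        = ∑ i, ∑ j, (if i ∈ S then M i j - Z'' i j else 0) ^ 2 := by
      refine Finset.sum_congr rfl fun i _ => Finset.sum_congr rfl fun j _ => ?_
      simp [hB]
    rw [hAeq, hBeq]
    linarith [e1, e2, hfsq]
  -- decompose A
  set A1 : Matrix (Fin n) (Fin k) ℝ :=
    fun i j => if i ∈ S then Z i j - (Dᵀ * (D * Z)) i j else 0 with hA1def
  set A2 : Matrix (Fin n) (Fin k) ℝ :=
    fun i j => if i ∈ S then -((Dᵀ * E) i j) else 0 with hA2def
  have hMsum : M = Dᵀ * (D * Z) + Dᵀ * E := by rw [hM, Matrix.mul_add]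
  have hA12 : A = A1 + A2 := by
    ext i j
    by_cases hi : i ∈ S
    · rw [Matrix.add_apply]; simp [hA, hA1def, hA2def, hi, hMsum, Matrix.add_apply]; ring
    · rw [Matrix.add_apply]; simp [hA, hA1def, hA2def, hi, Matrix.add_apply]
  -- bound fsq A1
  have hA1b : (∑ i, ∑ j, (A1 i j) ^ 2) ≤ δ ^ 2 * ∑ i, ∑ j, (Z i j) ^ 2 := by
    rw [Finset.sum_comm, show (∑ i, ∑ j, (Z i j) ^ 2) = ∑ j, ∑ i, (Z i j) ^ 2 from
      Finset.sum_comm, Finset.mul_sum]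
    apply Finset.sum_le_sum
    intro j _
    have hcol := colA hδ0 hD S hScard (fun i => Z i j) (fun i hi => hZ0 i hi j)
    have hentry : ∀ i, (A1 i j) ^ 2
        = (if i ∈ S then Dᵀ.mulVec (D.mulVec (fun m => Z m j)) i - Z i j else 0) ^ 2 := by
      intro i
      have hmm : (Dᵀ * (D * Z)) i j = Dᵀ.mulVec (D.mulVec (fun m => Z m j)) i := by
        simp [Matrix.mul_apply, Matrix.mulVec, dotProduct]
      by_cases hi : i ∈ S
      · simp only [hA1def, hi, if_pos, hmm]; ring
      · simp [hA1def, hi]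
    simp_rw [hentry]
    exact hcol
  -- bound fsq A2
  have hA2b : (∑ i, ∑ j, (A2 i j) ^ 2) ≤ 2 * ∑ i, ∑ j, (E i j) ^ 2 := by
    rw [Finset.sum_comm, show (∑ i, ∑ j, (E i j) ^ 2) = ∑ j, ∑ i, (E i j) ^ 2 from
      Finset.sum_comm, Finset.mul_sum]
    apply Finset.sum_le_sum
    intro j _
    have hcol := colE hδ0 hδ1 hD S hScard (fun i => E i j)
    have hentry : ∀ i, (A2 i j) ^ 2
        = (if i ∈ S then Dᵀ.mulVec (fun m => E m j) i else 0) ^ 2 := by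
      intro i
      have hmm : (Dᵀ * E) i j = Dᵀ.mulVec (fun m => E m j) i := by
        simp [Matrix.mul_apply, Matrix.mulVec, dotProduct]
      by_cases hi : i ∈ S
      · simp only [hA2def, hi, if_pos, hmm]; ring
      · simp [hA2def, hi]
    simp_rw [hentry]
    exact hcol
  -- put everything together
  have hfnA1 : frobNorm A1 ≤ δ * frobNorm Z := by
    have h1 : frobNorm A1 ≤ Real.sqrt (δ ^ 2 * ∑ i, ∑ j, (Z i j) ^ 2) := Real.sqrt_le_sqrt hA1b
    rwa [Real.sqrt_mul (sq_nonneg δ), Real.sqrt_sq hδ0.le] at h1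
  have hfnA2 : frobNorm A2 ≤ Real.sqrt 2 * frobNorm E := by
    have h1 : frobNorm A2 ≤ Real.sqrt (2 * ∑ i, ∑ j, (E i j) ^ 2) := Real.sqrt_le_sqrt hA2b
    rwa [Real.sqrt_mul (by norm_num : (0:ℝ) ≤ 2)] at h1
  have hfnB : frobNorm B ≤ frobNorm A := frobNorm_le_of_fsq_le hBle
  have hfnA : frobNorm A ≤ δ * frobNorm Z + Real.sqrt 2 * frobNorm E := by
    calc frobNorm A = frobNorm (A1 + A2) := by rw [hA12]
      _ ≤ frobNorm A1 + frobNorm A2 := frobNorm_add_le A1 A2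
      _ ≤ δ * frobNorm Z + Real.sqrt 2 * frobNorm E := add_le_add hfnA1 hfnA2
  calc frobNorm (Z - Z'') = frobNorm (A + B) := by rw [hAB]
    _ ≤ frobNorm A + frobNorm B := frobNorm_add_le A B
    _ ≤ frobNorm A + frobNorm A := add_le_add le_rfl (hfnB.trans le_rfl)
    _ ≤ 2 * δ * frobNorm Z + 2 * Real.sqrt 2 * frobNorm E := by linarith [hfnA]

end
end
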